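/- For every integer n ≥ 1, every r ∈ {1,…,n}, and all real numbers θ and ζ: Σ_{π ∈ S_n, π_1 = r} θ^{ℓ(π)} ζ^{u(π)} = C(n−1, r−1) · (θ)_{r−1} · (ζ)_{n−r}, where the sum is over all permutations of {1,…,n} whose first entry equals r. Equivalently, under the distribution P_n^{(θ,ζ)} (θ,ζ > 0) the first entry π_1 has the Pólya–Eggenberger distribution: P(π_1 = r) = C(n−1, r−1)(θ)_{r−1}(ζ)_{n−r}/(θ+ζ)_{n−1}. -/

import Mathlib

open Finset

/-- `π j` is a lower record: it is the minimum among the first `j+1` entries. -/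
def isLowerRecord {n : ℕ} (π : Equiv.Perm (Fin n)) (j : Fin n) : Prop :=
  ∀ k, k ≤ j → π j ≤ π k

/-- `π j` is an upper record: it is the maximum among the first `j+1` entries. -/
def isUpperRecord {n : ℕ} (π : Equiv.Perm (Fin n)) (j : Fin n) : Prop :=
  ∀ k, k ≤ j → π k ≤ π j

instance {n : ℕ} (π : Equiv.Perm (Fin n)) (j : Fin n) : Decidable (isLowerRecord π j) :=
  inferInstanceAs (Decidable (∀ k, k ≤ j → π j ≤ π k))

instance {n : ℕ} (π : Equiv.Perm (Fin n)) (j : Fin n) : Decidable (isUpperRecord π j) :=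
  inferInstanceAs (Decidable (∀ k, k ≤ j → π k ≤ π j))

/-- number of proper (position ≥ 2, i.e. index ≥ 1) lower records -/
def properLowerCount {n : ℕ} (π : Equiv.Perm (Fin n)) : ℕ :=
  (univ.filter fun j : Fin n => 0 < j.val ∧ isLowerRecord π j).card

/-- number of proper (position ≥ 2, i.e. index ≥ 1) upper records -/
def properUpperCount {n : ℕ} (π : Equiv.Perm (Fin n)) : ℕ :=
  (univ.filter fun j : Fin n => 0 < j.val ∧ isUpperRecord π j).card

/-- `A n ℓ u` = number of permutations of `{1,…,n}` with exactly `ℓ` proper lower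
records and exactly `u` proper upper records. -/
def A (n ℓ u : ℕ) : ℕ :=
  (univ.filter fun π : Equiv.Perm (Fin n) =>
    properLowerCount π = ℓ ∧ properUpperCount π = u).card

/-- `Σ_{π ∈ S_n, π_1 = r} θ^{ℓ(π)} ζ^{u(π)} = C(n−1,r−1) (θ)_{r−1} (ζ)_{n−r}`;
equivalently, under `P_n^{(θ,ζ)}` the first entry has the Pólya–Eggenberger distribution. -/
def insLast {n : ℕ} (p : Fin (n+1)) (e : Equiv.Perm (Fin n)) : Equiv.Perm (Fin (n+1)) :=
  finSuccEquivLast.trans (e.optionCongr.trans (finSuccEquiv' p).symm)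

@[simp] lemma insLast_last {n : ℕ} (p : Fin (n+1)) (e : Equiv.Perm (Fin n)) :
    insLast p e (Fin.last n) = p := by simp [insLast]
@[simp] lemma insLast_castSucc {n : ℕ} (p : Fin (n+1)) (e : Equiv.Perm (Fin n)) (i : Fin n) :
    insLast p e i.castSucc = p.succAbove (e i) := by simp [insLast]

lemma insLast_bijective {n : ℕ} :
    Function.Bijective (fun pe : Fin (n+1) × Equiv.Perm (Fin n) => insLast pe.1 pe.2) := by
  rw [Fintype.bijective_iff_injective_and_card]
  constructor
  · rintro ⟨p, e⟩ ⟨q, f⟩ h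
    simp only at h
    have hp : p = q := by
      have := congrArg (fun π : Equiv.Perm (Fin (n+1)) => π (Fin.last n)) h
      simpa using this
    subst hp
    have he : e = f := by
      ext i
      have := congrArg (fun π : Equiv.Perm (Fin (n+1)) => π i.castSucc) h
      simp only [insLast_castSucc] at this
      exact congrArg Fin.val (Fin.succAbove_right_injective this)
    simp [he]
  · simp [Fintype.card_perm, Nat.factorial_succ]

lemma isLowerRecord_insLast_castSucc {n : ℕ} (p : Fin (n+1)) (e : Equiv.Perm (Fin n)) (i : Fin n) :
    isLowerRecord (insLast p e) i.castSucc ↔ isLowerRecord e i := by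
  constructor
  · intro h k hk
    have := h k.castSucc (Fin.castSucc_le_castSucc_iff.mpr hk)
    simpa [Fin.succAbove_le_succAbove_iff] using this
  · intro h k hk
    have hkl : k ≠ Fin.last n := by
      intro hh; subst hh; exact absurd hk (not_le.mpr (Fin.castSucc_lt_last i))
    obtain ⟨k', rfl⟩ : ∃ k', k = k'.castSucc := ⟨k.castPred hkl, by simp⟩
    simp only [insLast_castSucc, Fin.succAbove_le_succAbove_iff]
    exact h k' (Fin.castSucc_le_castSucc_iff.mp hk)

lemma isLowerRecord_insLast_last {n : ℕ} (p : Fin (n+1)) (e : Equiv.Perm (Fin n)) :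
    isLowerRecord (insLast p e) (Fin.last n) ↔ p = 0 := by
  constructor
  · intro h
    have h0 := h ((insLast p e).symm 0) (Fin.le_last _)
    rw [Equiv.apply_symm_apply, insLast_last] at h0
    exact le_antisymm h0 (Fin.zero_le _)
  · rintro rfl k _
    rw [insLast_last]; exact Fin.zero_le _

lemma isUpperRecord_insLast_castSucc {n : ℕ} (p : Fin (n+1)) (e : Equiv.Perm (Fin n)) (i : Fin n) :
    isUpperRecord (insLast p e) i.castSucc ↔ isUpperRecord e i := by
  constructor
  · intro h k hk
    have := h k.castSucc (Fin.castSucc_le_castSucc_iff.mpr hk)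
    simpa [Fin.succAbove_le_succAbove_iff] using this
  · intro h k hk
    have hkl : k ≠ Fin.last n := by
      intro hh; subst hh; exact absurd hk (not_le.mpr (Fin.castSucc_lt_last i))
    obtain ⟨k', rfl⟩ : ∃ k', k = k'.castSucc := ⟨k.castPred hkl, by simp⟩
    simp only [insLast_castSucc, Fin.succAbove_le_succAbove_iff]
    exact h k' (Fin.castSucc_le_castSucc_iff.mp hk)

lemma isUpperRecord_insLast_last {n : ℕ} (p : Fin (n+1)) (e : Equiv.Perm (Fin n)) :
    isUpperRecord (insLast p e) (Fin.last n) ↔ p = Fin.last n := by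
  constructor
  · intro h
    have h0 := h ((insLast p e).symm (Fin.last n)) (Fin.le_last _)
    rw [Equiv.apply_symm_apply, insLast_last] at h0
    exact le_antisymm (Fin.le_last _) h0
  · rintro rfl k _
    rw [insLast_last]; exact Fin.le_last _

lemma properLowerCount_insLast {m : ℕ} (p : Fin (m+2)) (e : Equiv.Perm (Fin (m+1))) :
    properLowerCount (insLast p e) = properLowerCount e + (if p = 0 then 1 else 0) := by
  unfold properLowerCount
  rw [card_filter, card_filter, Fin.sum_univ_castSucc]
  congr 1
  · exact Finset.sum_congr rfl fun i _ =>
      if_congr (and_congr Iff.rfl (isLowerRecord_insLast_castSucc p e i)) rfl rfl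
  · have h1 : (0:ℕ) < (Fin.last (m+1)).val := Nat.succ_pos _
    rw [if_congr (and_iff_right h1) rfl rfl]
    exact if_congr (isLowerRecord_insLast_last p e) rfl rfl

lemma properUpperCount_insLast {m : ℕ} (p : Fin (m+2)) (e : Equiv.Perm (Fin (m+1))) :
    properUpperCount (insLast p e) = properUpperCount e + (if p = Fin.last (m+1) then 1 else 0) := by
  unfold properUpperCount
  rw [card_filter, card_filter, Fin.sum_univ_castSucc]
  congr 1
  · exact Finset.sum_congr rfl fun i _ =>
      if_congr (and_congr Iff.rfl (isUpperRecord_insLast_castSucc p e i)) rfl rfl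
  · have h1 : (0:ℕ) < (Fin.last (m+1)).val := Nat.succ_pos _
    rw [if_congr (and_iff_right h1) rfl rfl]
    exact if_congr (isUpperRecord_insLast_last p e) rfl rfl

lemma succAbove_cond {m r : ℕ} (p : Fin (m+2)) (x : Fin (m+1)) :
    ((p.succAbove x).val + 1 = r) ↔
      (¬ (p.val + 1 = r) ∧ x.val + 1 = (if p.val + 1 < r then r - 1 else r)) := by
  have hv : ((p.succAbove x) : ℕ) = if (x:ℕ) < (p:ℕ) then (x:ℕ) else (x:ℕ)+1 := by
    rcases lt_or_ge (x.val) (p.val) with h | h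
    · rw [Fin.succAbove_of_castSucc_lt, Fin.coe_castSucc, if_pos h]
      exact Fin.lt_def.mpr (by simpa using h)
    · rw [Fin.succAbove_of_le_castSucc, Fin.val_succ, if_neg (not_lt.mpr h)]
      exact Fin.le_def.mpr (by simpa using h)
  rw [hv]
  split_ifs <;> omega

noncomputable def Ssum (m r : ℕ) (θ ζ : ℝ) : ℝ :=
  ∑ π : Equiv.Perm (Fin (m+1)),
    if (π 0).val + 1 = r then θ ^ properLowerCount π * ζ ^ properUpperCount π else 0

lemma summand_eq (m r : ℕ) (θ ζ : ℝ) (p : Fin (m+2)) (e : Equiv.Perm (Fin (m+1))) :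
    (if ((insLast p e) 0).val + 1 = r
      then θ ^ properLowerCount (insLast p e) * ζ ^ properUpperCount (insLast p e) else 0)
    = (if (¬ (p.val + 1 = r) ∧ (e 0).val + 1 = (if p.val + 1 < r then r - 1 else r))
      then ((if p.val = 0 then θ else 1) * (if p.val = m+1 then ζ else 1))
        * (θ ^ properLowerCount e * ζ ^ properUpperCount e) else 0) := by
  have h0 : (insLast p e) 0 = p.succAbove (e 0) := by
    rw [show (0 : Fin (m+2)) = (0 : Fin (m+1)).castSucc from rfl, insLast_castSucc]
  rw [h0]
  simp only [succAbove_cond]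
  refine if_congr Iff.rfl ?_ rfl
  have hp0 : (p.val = 0) ↔ (p = 0) := by rw [Fin.ext_iff]; simp
  have hpl : (p.val = m+1) ↔ (p = Fin.last (m+1)) := by rw [Fin.ext_iff]; simp
  have A : θ ^ (properLowerCount e + if p = 0 then 1 else 0)
      = θ ^ properLowerCount e * (if p.val = 0 then θ else 1) := by
    by_cases h1 : p = 0
    · rw [if_pos h1, if_pos (hp0.mpr h1), pow_succ]
    · rw [if_neg h1, if_neg (fun hh => h1 (hp0.mp hh)), add_zero, mul_one]
  have B : ζ ^ (properUpperCount e + if p = Fin.last (m+1) then 1 else 0)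
      = ζ ^ properUpperCount e * (if p.val = m+1 then ζ else 1) := by
    by_cases h1 : p = Fin.last (m+1)
    · rw [if_pos h1, if_pos (hpl.mpr h1), pow_succ]
    · rw [if_neg h1, if_neg (fun hh => h1 (hpl.mp hh)), add_zero, mul_one]
  rw [properLowerCount_insLast, properUpperCount_insLast, A, B]
  ring

lemma Ssum_rec (m r : ℕ) (hr1 : 1 ≤ r) (hr2 : r ≤ m+2) (θ ζ : ℝ) :
    Ssum (m+1) r θ ζ =
      (if 2 ≤ r then (θ + ((r-2 : ℕ) : ℝ)) * Ssum m (r-1) θ ζ else 0)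
      + (if r ≤ m+1 then (ζ + ((m+1-r : ℕ) : ℝ)) * Ssum m r θ ζ else 0) := by
  have key : Ssum (m+1) r θ ζ
      = ∑ v ∈ range (m+2), (if v + 1 = r then 0 else
          ((if v = 0 then θ else 1) * (if v = m+1 then ζ else 1))
            * Ssum m (if v + 1 < r then r - 1 else r) θ ζ) := by
    rw [Ssum, ← Function.Bijective.sum_comp (insLast_bijective (n := m+1))
      (fun π => if (π 0).val + 1 = r then θ ^ properLowerCount π * ζ ^ properUpperCount π else 0),
      Fintype.sum_prod_type]
    rw [← Fin.sum_univ_eq_sum_range (fun v => if v + 1 = r then 0 else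
          ((if v = 0 then θ else 1) * (if v = m+1 then ζ else 1))
            * Ssum m (if v + 1 < r then r - 1 else r) θ ζ) (m+2)]
    apply Finset.sum_congr rfl
    intro p _
    rw [show (∑ e : Equiv.Perm (Fin (m+1)), _) = ∑ e : Equiv.Perm (Fin (m+1)),
        (if (¬ (p.val + 1 = r) ∧ (e 0).val + 1 = (if p.val + 1 < r then r - 1 else r))
          then ((if p.val = 0 then θ else 1) * (if p.val = m+1 then ζ else 1))
            * (θ ^ properLowerCount e * ζ ^ properUpperCount e) else 0)
      from Finset.sum_congr rfl fun e _ => summand_eq m r θ ζ p e]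
    by_cases hp : p.val + 1 = r
    · simp [hp]
    · rw [if_neg hp, Ssum, Finset.mul_sum]
      apply Finset.sum_congr rfl
      intro e _
      simp only [hp, not_false_iff, true_and, mul_ite, mul_zero]
  rw [key]
  rw [range_eq_Ico, ← Finset.sum_Ico_consecutive _ (Nat.zero_le (r-1)) (show r-1 ≤ m+2 by omega),
    Finset.sum_eq_sum_Ico_succ_bot (show r-1 < m+2 by omega)]
  have hb : r - 1 + 1 = r := by omega
  rw [hb, if_pos rfl]
  have h1 : (∑ v ∈ Ico 0 (r-1), (if v + 1 = r then 0 else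
          ((if v = 0 then θ else 1) * (if v = m+1 then ζ else 1))
            * Ssum m (if v + 1 < r then r - 1 else r) θ ζ))
      = (if 2 ≤ r then (θ + ((r-2 : ℕ) : ℝ)) * Ssum m (r-1) θ ζ else 0) := by
    rcases Nat.lt_or_ge r 2 with h | h
    · have h0 : r - 1 = 0 := by omega
      rw [h0, if_neg (by omega)]
      simp
    · rw [if_pos h]
      rw [Finset.sum_congr rfl (fun v hv => by
        simp only [mem_Ico] at hv
        rw [if_neg (by omega : ¬ v + 1 = r), if_pos (by omega : v + 1 < r),
          if_neg (by omega : ¬ v = m+1), mul_one])]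
      rw [← Finset.sum_mul]
      congr 1
      obtain ⟨s, hs⟩ : ∃ s, r - 1 = s + 1 := ⟨r-2, by omega⟩
      rw [hs, ← range_eq_Ico, Finset.sum_range_succ']
      have h2s : (r - 2 : ℕ) = s := by omega
      rw [h2s]
      simp [Nat.succ_ne_zero]
      ring
  have h2 : (∑ v ∈ Ico r (m+2), (if v + 1 = r then 0 else
          ((if v = 0 then θ else 1) * (if v = m+1 then ζ else 1))
            * Ssum m (if v + 1 < r then r - 1 else r) θ ζ))
      = (if r ≤ m+1 then (ζ + ((m+1-r : ℕ) : ℝ)) * Ssum m r θ ζ else 0) := by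
    rcases Nat.lt_or_ge (m+1) r with h | h
    · rw [Ico_eq_empty (by omega), sum_empty, if_neg (by omega)]
    · rw [if_pos h]
      rw [Finset.sum_congr rfl (fun v hv => by
        simp only [mem_Ico] at hv
        rw [if_neg (by omega : ¬ v + 1 = r), if_neg (by omega : ¬ v + 1 < r),
          if_neg (by omega : ¬ v = 0), one_mul])]
      rw [← Finset.sum_mul]
      congr 1
      rw [Finset.sum_Ico_succ_top h, if_pos rfl,
        Finset.sum_congr rfl (fun v hv => if_neg (by simp only [mem_Ico] at hv; omega)),
        Finset.sum_const, Nat.card_Ico]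
      simp [nsmul_eq_mul]
      ring
  rw [h1, h2, zero_add]

lemma Ssum_base (θ ζ : ℝ) : Ssum 0 1 θ ζ = 1 := by
  rw [Ssum]
  have h : ∀ π : Equiv.Perm (Fin 1),
      (if (π 0).val + 1 = 1 then θ ^ properLowerCount π * ζ ^ properUpperCount π else 0) = 1 := by
    intro π
    have h1 : (π 0).val = 0 := by omega
    have h2 : properLowerCount π = 0 := by
      unfold properLowerCount
      rw [Finset.card_eq_zero, Finset.filter_eq_empty_iff]
      intro j _
      simp [Nat.lt_irrefl, show j.val = 0 by omega]
    have h3 : properUpperCount π = 0 := by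
      unfold properUpperCount
      rw [Finset.card_eq_zero, Finset.filter_eq_empty_iff]
      intro j _
      simp [Nat.lt_irrefl, show j.val = 0 by omega]
    rw [if_pos (by omega), h2, h3, pow_zero, pow_zero, mul_one]
  rw [Finset.sum_congr rfl (fun π _ => h π), Finset.sum_const, Finset.card_univ,
    Fintype.card_perm]
  simp

lemma Ssum_eq (m : ℕ) : ∀ r, 1 ≤ r → r ≤ m+1 → ∀ θ ζ : ℝ,
    Ssum m r θ ζ = (Nat.choose m (r-1) : ℝ) * (∏ j ∈ Finset.range (r-1), (θ + (j:ℝ)))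
      * (∏ j ∈ Finset.range (m+1-r), (ζ + (j:ℝ))) := by
  induction m with
  | zero =>
    intro r h1 h2 θ ζ
    have : r = 1 := by omega
    subst this
    simpa using Ssum_base θ ζ
  | succ m ih =>
    intro r h1 h2 θ ζ
    rw [Ssum_rec m r h1 (by omega)]
    by_cases hA : 2 ≤ r
    · by_cases hB : r ≤ m+1
      · obtain ⟨s, rfl⟩ : ∃ s, r = s + 2 := ⟨r-2, by omega⟩
        obtain ⟨t, rfl⟩ : ∃ t, m = s + 1 + t := ⟨m-s-1, by omega⟩
        have e3 : s+1+t+1 - (s+2) = t := by omega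
        have e4 : s+1+t+1+1 - (s+2) = t+1 := by omega
        have e5 : s+1+t+1 - (s+1) = t+1 := by omega
        rw [if_pos hA, if_pos hB,
          show s+2-1 = s+1 from rfl, show s+2-2 = s from rfl, e3, e4]
        rw [ih (s+1) (by omega) (by omega), ih (s+2) (by omega) (by omega)]
        rw [show s+1-1 = s from rfl, show s+2-1 = s+1 from rfl, e5, e3,
          Nat.choose_succ_succ' (s+1+t) s]
        simp only [Finset.prod_range_succ]
        push_cast
        ring
      · have hr : r = m+2 := by omega
        subst hr
        rw [if_pos hA, if_neg hB, add_zero]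
        have e1 : m+2-1 = m+1 := rfl
        have e2 : m+2-2 = m := rfl
        have e3 : m+1-(m+1) = 0 := by omega
        have e4 : m+1+1-(m+2) = 0 := by omega
        have e5 : m+1-1 = m := rfl
        rw [e1, e2, e4]
        rw [ih (m+1) (by omega) (by omega)]
        rw [e3, e5, Nat.choose_self, Nat.choose_self,
          Finset.prod_range_succ (fun j => θ + (j:ℝ)) m]
        simp
        ring
    · have hr : r = 1 := by omega
      subst hr
      rw [if_neg hA, if_pos (by omega), zero_add, ih 1 (by omega) (by omega)]
      have e1 : (1:ℕ) - 1 = 0 := rfl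
      have e2 : m+1-1 = m := rfl
      have e3 : m+1+1-1 = m+1 := rfl
      rw [e1, e2, e3, Nat.choose_zero_right, Nat.choose_zero_right,
        Finset.prod_range_succ (fun j => ζ + (j:ℝ)) m]
      simp
      ring

theorem stmt_10 (n r : ℕ) (hn : 0 < n) (hr1 : 1 ≤ r) (hrn : r ≤ n) (θ ζ : ℝ) :
    (∑ π ∈ univ.filter (fun π : Equiv.Perm (Fin n) => (π ⟨0, hn⟩).val + 1 = r),
        θ ^ properLowerCount π * ζ ^ properUpperCount π)
      = (Nat.choose (n - 1) (r - 1) : ℝ)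
        * (∏ j ∈ Finset.range (r - 1), (θ + (j : ℝ)))
        * (∏ j ∈ Finset.range (n - r), (ζ + (j : ℝ))) := by
  obtain ⟨m, rfl⟩ : ∃ m, n = m + 1 := ⟨n-1, by omega⟩
  rw [Finset.sum_filter]
  have h := Ssum_eq m r hr1 hrn θ ζ
  rw [Ssum] at h
  convert h using 2
  · rw [Fin.zero_eta]
  · rw [Nat.add_sub_cancel]
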